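/- Every just non-Dedekind (JND) group G is monolithic: the intersection of all nontrivial normal subgroups of G is nontrivial, so G has a smallest nontrivial normal subgroup. -/

import Mathlib

/-- A group is Dedekind if every subgroup of it is normal. -/
def IsDedekind (G : Type*) [Group G] : Prop := ∀ H : Subgroup G, H.Normal

/-- A group is just non-Dedekind (JND) if it is not Dedekind but every quotient
by a nontrivial normal subgroup is Dedekind. -/
def IsJND (G : Type*) [Group G] : Prop :=
  ¬ IsDedekind G ∧
    ∀ (N : Subgroup G) (hN : N.Normal), N ≠ ⊥ →
      letI := hN
      IsDedekind (G ⧸ N)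

open scoped commutatorElement

/-- In a Dedekind group, conjugation preserves every cyclic subgroup. -/
lemma IsDedekind.conj_zpowers {D : Type*} [Group D] (hD : IsDedekind D) (h w : D) :
    ∃ i : ℤ, h * w * h⁻¹ = w ^ i := by
  obtain ⟨i, hi⟩ := Subgroup.mem_zpowers_iff.mp
    ((hD (Subgroup.zpowers w)).conj_mem w (Subgroup.mem_zpowers w) h)
  exact ⟨i, hi.symm⟩

/-- In a Dedekind group, every commutator is central. -/
lemma IsDedekind.commutator_central {D : Type*} [Group D] (hD : IsDedekind D)
    (a b z : D) : ⁅⁅a, b⁆, z⁆ = 1 := by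
  rw [commutatorElement_eq_one_iff_commute]
  have key : ∀ a b : D, (a⁻¹ * b⁻¹ * a * b) * z = z * (a⁻¹ * b⁻¹ * a * b) := by
    intro a b
    obtain ⟨i, hi⟩ := hD.conj_zpowers a z
    obtain ⟨j, hj⟩ := hD.conj_zpowers b z
    have conj_zpow : ∀ (u : D) (k : ℤ), u * z ^ k * u⁻¹ = (u * z * u⁻¹) ^ k := by
      intro u k
      have h0 := map_zpow (MulAut.conj u) z k
      simp only [MulAut.conj_apply] at h0
      exact h0
    have h1 : (a * b) * z * (a * b)⁻¹ = z ^ (i * j) := by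
      calc (a * b) * z * (a * b)⁻¹ = a * (b * z * b⁻¹) * a⁻¹ := by group
        _ = a * z ^ j * a⁻¹ := by rw [hj]
        _ = (a * z * a⁻¹) ^ j := conj_zpow a j
        _ = (z ^ i) ^ j := by rw [hi]
        _ = z ^ (i * j) := (zpow_mul z i j).symm
    have h2 : (b * a) * z * (b * a)⁻¹ = z ^ (i * j) := by
      calc (b * a) * z * (b * a)⁻¹ = b * (a * z * a⁻¹) * b⁻¹ := by group
        _ = b * z ^ i * b⁻¹ := by rw [hi]
        _ = (b * z * b⁻¹) ^ i := conj_zpow b i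
        _ = (z ^ j) ^ i := by rw [hj]
        _ = z ^ (i * j) := by rw [← zpow_mul, mul_comm]
    have h3 : (a⁻¹ * b⁻¹ * a * b) * z * (a⁻¹ * b⁻¹ * a * b)⁻¹ = z := by
      calc (a⁻¹ * b⁻¹ * a * b) * z * (a⁻¹ * b⁻¹ * a * b)⁻¹
          = (b * a)⁻¹ * ((a * b) * z * (a * b)⁻¹) * (b * a) := by group
        _ = (b * a)⁻¹ * ((b * a) * z * (b * a)⁻¹) * (b * a) := by rw [h1, h2]
        _ = z := by group
    conv_rhs => rw [← h3]
    group
  have := key a⁻¹ b⁻¹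
  rw [inv_inv, inv_inv] at this
  show ⁅a, b⁆ * z = z * ⁅a, b⁆
  rw [commutatorElement_def]
  exact this

/-- Every JND group is monolithic: it has a smallest nontrivial normal subgroup. -/
theorem jnd_monolithic {G : Type*} [Group G] (hG : IsJND G) :
    ∃ M : Subgroup G, M.Normal ∧ M ≠ ⊥ ∧
      ∀ N : Subgroup G, N.Normal → N ≠ ⊥ → M ≤ N := by
  obtain ⟨hnd, hq⟩ := hG
  set S : Set (Subgroup G) := {N | N.Normal ∧ N ≠ ⊥} with hS
  refine ⟨sInf S, ?_, ?_, fun N hN hNb => sInf_le ⟨hN, hNb⟩⟩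
  · constructor
    intro x hx g
    rw [Subgroup.mem_sInf] at hx ⊢
    intro N hN
    exact hN.1.conj_mem x (hx N hN) g
  · -- the heart of the proof: the intersection of all nontrivial normal subgroups
    -- is nontrivial.
    intro hbot
    -- transfer principle: anything lying in all nontrivial normal subgroups is 1
    have allN : ∀ x : G, (∀ (N : Subgroup G), N.Normal → N ≠ ⊥ → x ∈ N) → x = 1 := by
      intro x hx
      have : x ∈ sInf S := Subgroup.mem_sInf.mpr (fun N hN => hx N hN.1 hN.2)
      rw [hbot] at this
      exact Subgroup.mem_bot.mp this
    -- G is not Dedekind: some cyclic subgroup is not normal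
    obtain ⟨g, y, hy⟩ : ∃ g y : G, g * y * g⁻¹ ∉ Subgroup.zpowers y := by
      by_contra h
      push_neg at h
      exact hnd (fun H => ⟨fun n hn g => Subgroup.zpowers_le.mpr hn (h g n)⟩)
    -- all commutators of G are central
    have hcomm : ∀ a b z : G, ⁅⁅a, b⁆, z⁆ = 1 := by
      intro a b z
      refine allN _ (fun N hN hNb => ?_)
      haveI := hN
      have hD : IsDedekind (G ⧸ N) := hq N hN hNb
      have h1 : (QuotientGroup.mk' N) ⁅⁅a, b⁆, z⁆ = 1 := by
        rw [map_commutatorElement, map_commutatorElement]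
        exact hD.commutator_central _ _ _
      rwa [QuotientGroup.mk'_apply, QuotientGroup.eq_one_iff] at h1
    have central : ∀ a b : G, ⁅a, b⁆ ∈ Subgroup.center G := by
      intro a b
      rw [Subgroup.mem_center_iff]
      intro w
      exact ((commutatorElement_eq_one_iff_commute.mp (hcomm a b w)).symm).eq
    -- cyclic subgroups generated by central elements are normal
    have hZN : ∀ z : G, z ∈ Subgroup.center G → (Subgroup.zpowers z).Normal := by
      intro z hz
      constructor
      intro n hn gg
      obtain ⟨k, hk⟩ := Subgroup.mem_zpowers_iff.mp hn
      have hcz : Commute gg z := Subgroup.mem_center_iff.mp hz gg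
      have hcz' : Commute gg (z ^ k) := hcz.zpow_right k
      have hfix : gg * n * gg⁻¹ = n := by
        rw [← hk, hcz'.eq]
        group
      rw [hfix]
      exact hn
    -- key: for any nontrivial central z, the failure of normality of ⟨y⟩ is
    -- witnessed inside ⟨y⟩ ⬝ ⟨z⟩
    have key : ∀ z : G, z ∈ Subgroup.center G → z ≠ 1 →
        ∃ m : ℤ, g * y * g⁻¹ * (y ^ m)⁻¹ ∈ Subgroup.zpowers z := by
      intro z hz hz1
      have hNz : (Subgroup.zpowers z).Normal := hZN z hz
      haveI := hNz
      have hNb : Subgroup.zpowers z ≠ ⊥ := Subgroup.zpowers_ne_bot.mpr hz1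
      have hD : IsDedekind (G ⧸ Subgroup.zpowers z) := hq _ hNz hNb
      obtain ⟨m, hm⟩ := hD.conj_zpowers (↑g : G ⧸ Subgroup.zpowers z) (↑y)
      refine ⟨m, ?_⟩
      rw [← QuotientGroup.eq_one_iff]
      have : ((g * y * g⁻¹ * (y ^ m)⁻¹ : G) : G ⧸ Subgroup.zpowers z)
          = ((g : G ⧸ Subgroup.zpowers z) * y * (g : G ⧸ Subgroup.zpowers z)⁻¹)
            * (((y : G ⧸ Subgroup.zpowers z)) ^ m)⁻¹ := by
        rfl
      rw [this, hm]
      simp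
    -- no nontrivial central element lies in ⟨y⟩
    have hZy : ∀ w : G, w ∈ Subgroup.center G → w ∈ Subgroup.zpowers y → w = 1 := by
      intro w hw hwy
      by_contra hw1
      obtain ⟨m, hm⟩ := key w hw hw1
      apply hy
      have h2 : g * y * g⁻¹ * (y ^ m)⁻¹ ∈ Subgroup.zpowers y :=
        (Subgroup.zpowers_le.mpr hwy) hm
      have h3 := Subgroup.mul_mem _ h2
        (Subgroup.zpow_mem _ (Subgroup.mem_zpowers y) m)
      simpa [mul_assoc] using h3
    -- the center is nontrivial: c = ⁅g,y⁆ is a nontrivial central element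
    have hccen : ⁅g, y⁆ ∈ Subgroup.center G := central g y
    have hc1 : ⁅g, y⁆ ≠ 1 := by
      intro h
      apply hy
      have : g * y = y * g := (commutatorElement_eq_one_iff_commute.mp h).eq
      have : g * y * g⁻¹ = y := by rw [this]; group
      rw [this]
      exact Subgroup.mem_zpowers y
    obtain ⟨m₀, hm₀⟩ := key ⁅g, y⁆ hccen hc1
    set d : G := g * y * g⁻¹ * (y ^ m₀)⁻¹ with hd_def
    have hd1 : d ≠ 1 := by
      intro h
      apply hy
      rw [hd_def] at h
      rw [mul_inv_eq_one.mp h]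
      exact Subgroup.zpow_mem _ (Subgroup.mem_zpowers y) m₀
    have hdcen : d ∈ Subgroup.center G :=
      (Subgroup.zpowers_le.mpr hccen) hm₀
    -- d lies in ⟨z⟩ for EVERY nontrivial central z
    have hdz : ∀ z : G, z ∈ Subgroup.center G → z ≠ 1 → d ∈ Subgroup.zpowers z := by
      intro z hz hz1
      obtain ⟨m, hm⟩ := key z hz hz1
      set dz : G := g * y * g⁻¹ * (y ^ m)⁻¹ with hdz_def
      have hdzcen : dz ∈ Subgroup.center G := (Subgroup.zpowers_le.mpr hz) hm
      have he : dz⁻¹ * d = y ^ (m - m₀) := by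
        rw [hdz_def, hd_def]
        group
      have hecen : dz⁻¹ * d ∈ Subgroup.center G :=
        Subgroup.mul_mem _ (Subgroup.inv_mem _ hdzcen) hdcen
      have hey : dz⁻¹ * d ∈ Subgroup.zpowers y := by
        rw [he]
        exact Subgroup.zpow_mem _ (Subgroup.mem_zpowers y) _
      have h1 : dz⁻¹ * d = 1 := hZy _ hecen hey
      rw [← inv_mul_eq_one.mp h1]
      exact hm
    -- d lies in every nontrivial normal subgroup
    have hdN : ∀ (N : Subgroup G), N.Normal → N ≠ ⊥ → d ∈ N := by
      intro N hN hNb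
      obtain ⟨n, hn, hn1⟩ : ∃ n ∈ N, n ≠ 1 := by
        by_contra h
        push_neg at h
        exact hNb ((Subgroup.eq_bot_iff_forall N).mpr h)
      by_cases hcen : n ∈ Subgroup.center G
      · exact Subgroup.zpowers_le.mpr hn (hdz n hcen hn1)
      · rw [Subgroup.mem_center_iff] at hcen
        push_neg at hcen
        obtain ⟨h, hh⟩ := hcen
        have ht : ⁅h, n⁆ ∈ N := by
          rw [commutatorElement_def]
          exact N.mul_mem (hN.conj_mem n hn h) (N.inv_mem hn)
        have ht1 : ⁅h, n⁆ ≠ 1 := by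
          intro e
          exact hh (commutatorElement_eq_one_iff_commute.mp e).eq
        exact Subgroup.zpowers_le.mpr ht (hdz _ (central h n) ht1)
    exact hd1 (allN d hdN)
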